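/- An irreducible stochastic matrix P has at most one reversible embedding: if Q_1 and Q_2 are both reversible generator matrices with e^{Q_1} = e^{Q_2} = P, then Q_1 = Q_2. -/

import Mathlib

open Matrix

/-- `P` is a stochastic matrix: nonnegative entries, rows sum to 1. -/
def IsStochastic {n : ℕ} (P : Matrix (Fin n) (Fin n) ℝ) : Prop :=
  (∀ i j, 0 ≤ P i j) ∧ ∀ i, ∑ j, P i j = 1

/-- A stochastic matrix is irreducible if its directed graph is strongly connected. -/
def IsIrreducibleStochastic {n : ℕ} (P : Matrix (Fin n) (Fin n) ℝ) : Prop :=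
  ∀ i j : Fin n, Relation.ReflTransGen (fun a b => 0 < P a b) i j

/-- `Q` is a reversible generator matrix: a generator matrix admitting a
probability distribution satisfying detailed balance. -/
def IsReversibleGenerator {n : ℕ} (Q : Matrix (Fin n) (Fin n) ℝ) : Prop :=
  ((∀ i j, i ≠ j → 0 ≤ Q i j) ∧ ∀ i, ∑ j, Q i j = 0) ∧
  ∃ π : Fin n → ℝ, (∀ i, 0 ≤ π i) ∧ (∑ i, π i = 1) ∧
    ∀ i j, π i * Q i j = π j * Q j i

section Aux

open Polynomial
open scoped Nat

private lemma aeval_units_conj' {n : ℕ} (w : (Matrix (Fin n) (Fin n) ℝ)ˣ)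
    (B : Matrix (Fin n) (Fin n) ℝ) (p : ℝ[X]) :
    aeval (w.val * B * (w⁻¹).val) p = w.val * aeval B p * (w⁻¹).val := by
  induction p using Polynomial.induction_on' with
  | add p q hp hq => rw [map_add, map_add, hp, hq, mul_add, add_mul]
  | monomial k a =>
    rw [aeval_monomial, aeval_monomial, Units.conj_pow, ← Algebra.smul_def, ← Algebra.smul_def,
      mul_smul_comm, smul_mul_assoc]

private lemma aeval_diagonal' {n : ℕ} (v : Fin n → ℝ) (p : ℝ[X]) :
    aeval (diagonal v : Matrix (Fin n) (Fin n) ℝ) p = diagonal (fun i => p.eval (v i)) := by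
  have hfun : (aeval v p : Fin n → ℝ) = fun i => p.eval (v i) := by
    funext i
    rw [show (aeval v p) i = (Pi.evalAlgHom ℝ (fun _ => ℝ) i) (aeval v p) from rfl,
      ← aeval_algHom_apply]
    simp [aeval_def, eval₂_eq_eval_map]
  rw [show (diagonal v : Matrix (Fin n) (Fin n) ℝ)
      = Matrix.diagonalAlgHom (n := Fin n) (α := ℝ) ℝ v from rfl, aeval_algHom_apply]
  simp only [diagonalAlgHom_apply, hfun]

private lemma pi_pos' {n : ℕ} (P Q : Matrix (Fin n) (Fin n) ℝ) (π : Fin n → ℝ)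
    (hP : IsStochastic P) (hPirr : IsIrreducibleStochastic P)
    (hgen : ∀ i, ∑ j, Q i j = 0)
    (hπ0 : ∀ i, 0 ≤ π i) (hπ1 : ∑ i, π i = 1)
    (hdb : ∀ i j, π i * Q i j = π j * Q j i)
    (hPQ : NormedSpace.exp Q = P) : ∀ i, 0 < π i := by
  have hker : Qᵀ *ᵥ π = 0 := by
    funext i
    simp only [mulVec, dotProduct, transpose_apply, Pi.zero_apply]
    calc ∑ j, Q j i * π j = ∑ j, π i * Q i j := by
          refine Finset.sum_congr rfl fun j _ => ?_
          rw [mul_comm, hdb]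
      _ = 0 := by rw [← Finset.mul_sum, hgen, mul_zero]
  have hinv : Pᵀ *ᵥ π = π := by
    rw [← hPQ, ← Matrix.exp_transpose]
    letI : NormedRing (Matrix (Fin n) (Fin n) ℝ) := Matrix.linftyOpNormedRing
    letI : NormedAlgebra ℝ (Matrix (Fin n) (Fin n) ℝ) := Matrix.linftyOpNormedAlgebra
    have hsum : Summable (fun k : ℕ => (k !⁻¹ : ℝ) • Qᵀ ^ k) :=
      NormedSpace.expSeries_summable' Qᵀ
    let L : Matrix (Fin n) (Fin n) ℝ →ₗ[ℝ] (Fin n → ℝ) :=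
      { toFun := fun M => M *ᵥ π
        map_add' := fun A B => Matrix.add_mulVec A B π
        map_smul' := fun c A => Matrix.smul_mulVec c A π }
    have hcont : Continuous L := L.continuous_of_finiteDimensional
    have key : (∑' k : ℕ, (k !⁻¹ : ℝ) • Qᵀ ^ k) *ᵥ π
        = ∑' k : ℕ, ((k !⁻¹ : ℝ) • Qᵀ ^ k) *ᵥ π :=
      ContinuousLinearMap.map_tsum ⟨L, hcont⟩ hsum
    simp only [NormedSpace.exp_eq_tsum ℝ]
    rw [key]
    have hterm : ∀ k : ℕ, ((k !⁻¹ : ℝ) • Qᵀ ^ k) *ᵥ π = if k = 0 then π else 0 := by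
      intro k
      cases k with
      | zero => simp
      | succ m =>
        rw [Matrix.smul_mulVec, pow_succ, ← Matrix.mulVec_mulVec, hker,
          Matrix.mulVec_zero, smul_zero]
        simp
    calc (∑' k, ((k !⁻¹ : ℝ) • Qᵀ ^ k) *ᵥ π) = ∑' k, if k = 0 then π else 0 := by
          congr 1; funext k; exact hterm k
      _ = π := by rw [tsum_eq_single 0 (fun b hb => by simp [hb])]; simp
  intro i
  rcases lt_or_eq_of_le (hπ0 i) with h | h
  · exact h
  exfalso
  have hzero : ∀ j, π j = 0 := by
    intro j
    have hpath := hPirr j i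
    induction hpath using Relation.ReflTransGen.head_induction_on with
    | refl => exact h.symm
    | head hjc _ ih =>
      rename_i a c _
      have hc : π c = 0 := ih
      have : (Pᵀ *ᵥ π) c = 0 := by rw [hinv]; exact hc
      simp only [mulVec, dotProduct, transpose_apply] at this
      have hterm0 : P a c * π a = 0 :=
        (Finset.sum_eq_zero_iff_of_nonneg
          (fun m _ => mul_nonneg (hP.1 m c) (hπ0 m))).1 this a (Finset.mem_univ a)
      rcases mul_eq_zero.1 hterm0 with h' | h'
      · exact absurd h' hjc.ne'
      · exact h'
  have : (1 : ℝ) = 0 := by rw [← hπ1, Finset.sum_eq_zero fun j _ => hzero j]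
  norm_num at this

private lemma exists_conj_diag' {n : ℕ} (Q : Matrix (Fin n) (Fin n) ℝ) (π : Fin n → ℝ)
    (hπ : ∀ i, 0 < π i) (hdb : ∀ i j, π i * Q i j = π j * Q j i) :
    ∃ (w : (Matrix (Fin n) (Fin n) ℝ)ˣ) (e : Fin n → ℝ),
      Q = w.val * diagonal e * (w⁻¹).val := by
  set d : Fin n → ℝ := fun i => Real.sqrt (π i) with hd_def
  have hd : ∀ i, 0 < d i := fun i => Real.sqrt_pos.2 (hπ i)
  have hdd : ∀ i, d i * d i = π i := fun i => Real.mul_self_sqrt (hπ i).le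
  set D : Matrix (Fin n) (Fin n) ℝ := diagonal d with hD
  set E : Matrix (Fin n) (Fin n) ℝ := diagonal (fun i => (d i)⁻¹) with hE
  have hDE : D * E = 1 := by
    rw [hD, hE, diagonal_mul_diagonal,
      show (fun i => d i * (d i)⁻¹) = fun _ : Fin n => (1 : ℝ) from
        funext fun i => mul_inv_cancel₀ (hd i).ne', diagonal_one]
  have hED : E * D = 1 := by
    rw [hD, hE, diagonal_mul_diagonal,
      show (fun i => (d i)⁻¹ * d i) = fun _ : Fin n => (1 : ℝ) from
        funext fun i => inv_mul_cancel₀ (hd i).ne', diagonal_one]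
  have hA : (D * Q * E).IsHermitian := by
    have hAentry : ∀ i j, (D * Q * E) i j = d i * Q i j * (d j)⁻¹ := by
      intro i j
      rw [hD, hE, Matrix.mul_diagonal, Matrix.diagonal_mul]
    ext i j
    rw [conjTranspose_apply, hAentry, hAentry, star_trivial]
    have h1 := hdb i j
    rw [← hdd i, ← hdd j] at h1
    have hi := (hd i).ne'
    have hj := (hd j).ne'
    field_simp
    linear_combination (-1 : ℝ) * h1
  have hspec := hA.spectral_theorem
  set V : Matrix (Fin n) (Fin n) ℝ := (hA.eigenvectorUnitary : Matrix (Fin n) (Fin n) ℝ)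
  set u : (Matrix (Fin n) (Fin n) ℝ)ˣ := ⟨E, D, hED, hDE⟩ with hu
  set vU : (Matrix (Fin n) (Fin n) ℝ)ˣ := Unitary.toUnits hA.eigenvectorUnitary with hvU
  refine ⟨u * vU, hA.eigenvalues, ?_⟩
  have hvUinv : ((vU⁻¹ : (Matrix (Fin n) (Fin n) ℝ)ˣ) : Matrix (Fin n) (Fin n) ℝ) = star V := by
    rw [hvU, ← map_inv, ← Unitary.star_eq_inv]
    rfl
  have hdiag : diagonal (RCLike.ofReal ∘ hA.eigenvalues) = diagonal hA.eigenvalues := by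
    congr 1
  have hQ2 : Q = E * (V * diagonal hA.eigenvalues * star V) * D := by
    simp only [Unitary.conjStarAlgAut_apply, Unitary.coe_star] at hspec; rw [← hdiag, ← hspec]
    calc Q = (E * D) * Q * (E * D) := by rw [hED, one_mul, mul_one]
      _ = E * (D * Q * E) * D := by noncomm_ring
  have h1 : ((u * vU : (Matrix (Fin n) (Fin n) ℝ)ˣ) : Matrix (Fin n) (Fin n) ℝ) = E * V := rfl
  have h2 : (((u * vU)⁻¹ : (Matrix (Fin n) (Fin n) ℝ)ˣ) : Matrix (Fin n) (Fin n) ℝ)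
      = star V * D := by
    rw [_root_.mul_inv_rev, Units.val_mul, hvUinv]
    rfl
  refine hQ2.trans ?_
  rw [h1, h2]
  noncomm_ring

private lemma exp_conj_diag {n : ℕ} (w : (Matrix (Fin n) (Fin n) ℝ)ˣ) (e : Fin n → ℝ) :
    NormedSpace.exp (w.val * diagonal e * (w⁻¹).val)
      = w.val * diagonal (fun i => Real.exp (e i)) * (w⁻¹).val := by
  rw [show w.val * diagonal e * (w⁻¹).val
      = ↑w * diagonal e * ↑w⁻¹ from rfl]
  rw [Matrix.exp_units_conj w (diagonal e), Matrix.exp_diagonal]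
  have : NormedSpace.exp e = fun i => Real.exp (e i) := by
    funext i
    rw [Pi.coe_exp, ← Real.exp_eq_exp_ℝ]
  rw [this]

end Aux

theorem reversible_embedding_unique {n : ℕ}
    (P Q₁ Q₂ : Matrix (Fin n) (Fin n) ℝ)
    (hP : IsStochastic P) (hPirr : IsIrreducibleStochastic P)
    (hQ₁ : IsReversibleGenerator Q₁) (hQ₂ : IsReversibleGenerator Q₂)
    (hPQ₁ : NormedSpace.exp Q₁ = P) (hPQ₂ : NormedSpace.exp Q₂ = P) :
    Q₁ = Q₂ := by
  obtain ⟨⟨hQ₁nn, hQ₁sum⟩, π₁, hπ₁0, hπ₁1, hdb₁⟩ := hQ₁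
  obtain ⟨⟨hQ₂nn, hQ₂sum⟩, π₂, hπ₂0, hπ₂1, hdb₂⟩ := hQ₂
  have hπ₁pos := pi_pos' P Q₁ π₁ hP hPirr hQ₁sum hπ₁0 hπ₁1 hdb₁ hPQ₁
  have hπ₂pos := pi_pos' P Q₂ π₂ hP hPirr hQ₂sum hπ₂0 hπ₂1 hdb₂ hPQ₂
  obtain ⟨w₁, e₁, hw₁⟩ := exists_conj_diag' Q₁ π₁ hπ₁pos hdb₁
  obtain ⟨w₂, e₂, hw₂⟩ := exists_conj_diag' Q₂ π₂ hπ₂pos hdb₂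
  have hP₁ : P = w₁.val * diagonal (fun i => Real.exp (e₁ i)) * (w₁⁻¹).val := by
    rw [← hPQ₁, hw₁, exp_conj_diag]
  have hP₂ : P = w₂.val * diagonal (fun i => Real.exp (e₂ i)) * (w₂⁻¹).val := by
    rw [← hPQ₂, hw₂, exp_conj_diag]
  classical
  set s : Finset ℝ :=
    (Finset.image (fun i => Real.exp (e₁ i)) Finset.univ) ∪
      (Finset.image (fun i => Real.exp (e₂ i)) Finset.univ) with hs
  have hinj : Set.InjOn id (↑s : Set ℝ) := fun a _ b _ h => h
  set p : Polynomial ℝ := Lagrange.interpolate s id Real.log with hp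
  have heval : ∀ x ∈ s, p.eval x = Real.log x := by
    intro x hx
    exact Lagrange.eval_interpolate_at_node Real.log hinj hx
  have key : ∀ (w : (Matrix (Fin n) (Fin n) ℝ)ˣ) (e : Fin n → ℝ),
      (∀ i, Real.exp (e i) ∈ s) →
      Polynomial.aeval (w.val * diagonal (fun i => Real.exp (e i)) * (w⁻¹).val) p
        = w.val * diagonal e * (w⁻¹).val := by
    intro w e hmem
    rw [aeval_units_conj', aeval_diagonal']
    have he : (fun i => p.eval (Real.exp (e i))) = e := by
      funext i
      rw [heval _ (hmem i), Real.log_exp]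
    rw [he]
  have hm₁ : ∀ i, Real.exp (e₁ i) ∈ s := fun i =>
    Finset.mem_union_left _ (Finset.mem_image_of_mem _ (Finset.mem_univ i))
  have hm₂ : ∀ i, Real.exp (e₂ i) ∈ s := fun i =>
    Finset.mem_union_right _ (Finset.mem_image_of_mem _ (Finset.mem_univ i))
  calc Q₁ = Polynomial.aeval P p := by rw [hP₁, key w₁ e₁ hm₁, ← hw₁]
    _ = Q₂ := by rw [hP₂, key w₂ e₂ hm₂, ← hw₂]
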